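/- If a polynomial p in ℝ[x_1,...,x_n] is written as a sum of squares p = q_1^2 + ... + q_k^2, then for each i the Newton polytope of q_i is contained in (1/2)·N_p, where N_p is the Newton polytope of p. Concretely: the convex hull in ℝ^n of the exponent vectors of monomials appearing in q_i is contained in the set (1/2)·(convex hull of the exponent vectors of monomials appearing in p). -/

import Mathlib

set_option maxHeartbeats 1000000

open MvPolynomial Pointwise


private noncomputable def embR {n : ℕ} : (Fin n →₀ ℕ) → (Fin n → ℝ) :=
  fun α j => (α j : ℝ)

private lemma embR_inj {n : ℕ} : Function.Injective (embR (n := n)) := by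
  intro a b h
  ext j
  have := congrFun h j
  simp only [embR] at this
  exact_mod_cast this

/-- The Newton polytope of a polynomial: the convex hull in `ℝⁿ` of the exponent
vectors of the monomials occurring in `p` with nonzero coefficient. -/
noncomputable def newtonPolytope {n : ℕ} (p : MvPolynomial (Fin n) ℝ) : Set (Fin n → ℝ) :=
  convexHull ℝ ((fun α : Fin n →₀ ℕ => fun j => (α j : ℝ)) '' (p.support : Set (Fin n →₀ ℕ)))

/-- If `p = q₁² + ⋯ + q_k²` is a sum of squares, then the Newton polytope of each `qᵢ`
is contained in `(1/2) • N_p`. -/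
theorem newtonPolytope_of_sum_of_squares {n k : ℕ} (p : MvPolynomial (Fin n) ℝ)
    (q : Fin k → MvPolynomial (Fin n) ℝ) (hp : p = ∑ i, (q i) ^ 2) :
    ∀ i : Fin k, newtonPolytope (q i) ⊆ (1 / 2 : ℝ) • newtonPolytope p := by
  set f : (Fin n →₀ ℕ) → (Fin n → ℝ) := embR with hf
  set A : Set (Fin n → ℝ) := f '' (⋃ i, ((q i).support : Set (Fin n →₀ ℕ))) with hA
  have hAfin : A.Finite := by
    apply Set.Finite.image
    exact Set.finite_iUnion (fun i => (q i).support.finite_toSet)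
  set E : Set (Fin n → ℝ) := (convexHull ℝ A).extremePoints ℝ with hE
  have hEA : E ⊆ A := extremePoints_convexHull_subset
  have hEfin : E.Finite := hAfin.subset hEA
  have hconv : convexHull ℝ A = convexHull ℝ E := by
    have h1 : closure (convexHull ℝ E) = convexHull ℝ A :=
      closure_convexHull_extremePoints (hAfin.isCompact_convexHull ℝ) (convex_convexHull ℝ A)
    rw [← h1, (hEfin.isClosed_convexHull ℝ).closure_eq]
  have hkey : ∀ e ∈ E, e ∈ (1 / 2 : ℝ) • newtonPolytope p := by
    intro e he
    obtain ⟨a, ha, rfl⟩ := hEA he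
    obtain ⟨i₀, hi₀⟩ : ∃ i, a ∈ (q i).support := by simpa using ha
    have hcoeff : ∀ i, coeff (a + a) ((q i) ^ 2) = (coeff a (q i)) ^ 2 := by
      intro i
      rw [sq, coeff_mul, Finset.sum_eq_single (a, a)]
      · ring
      · rintro ⟨b, c⟩ hbc hne
        simp only [Finset.HasAntidiagonal.mem_antidiagonal] at hbc
        by_contra hterm
        have hb : b ∈ (q i).support := by
          simp only [mem_support_iff]; intro h; exact hterm (by simp [h])
        have hc : c ∈ (q i).support := by
          simp only [mem_support_iff]; intro h; exact hterm (by simp [h])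
        have hfb : f b ∈ convexHull ℝ A := subset_convexHull ℝ A ⟨b, Set.mem_iUnion.2 ⟨i, hb⟩, rfl⟩
        have hfc : f c ∈ convexHull ℝ A := subset_convexHull ℝ A ⟨c, Set.mem_iUnion.2 ⟨i, hc⟩, rfl⟩
        have hsumj : ∀ j, (b j : ℝ) + c j = (a j : ℝ) + a j := by
          intro j
          have h := congrFun (congrArg f hbc) j
          simp only [hf, embR, Finsupp.add_apply] at h
          push_cast at h
          linarith
        have hmid : f a = (1/2 : ℝ) • f b + (1/2 : ℝ) • f c := by
          funext j
          simp only [hf, embR, Pi.add_apply, Pi.smul_apply, smul_eq_mul]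
          linarith [hsumj j]
        rcases eq_or_ne (f b) (f c) with heq | hneq
        · have hbc' : b = c := embR_inj heq
          subst hbc'
          have hba : b = a := by
            ext j
            have := hsumj j
            have : (b j : ℝ) = a j := by linarith
            exact_mod_cast this
          exact hne (by rw [hba])
        · have hopen : f a ∈ openSegment ℝ (f b) (f c) :=
            ⟨1/2, 1/2, by norm_num, by norm_num, by norm_num, hmid.symm⟩
          obtain ⟨h1, h2⟩ := (mem_extremePoints.1 he).2 (f b) hfb (f c) hfc hopen
          exact hne (by rw [Prod.mk.injEq]; exact ⟨embR_inj h1, embR_inj h2⟩)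
      · intro h
        simp [Finset.HasAntidiagonal.mem_antidiagonal] at h
    have hpos : 0 < coeff (a + a) p := by
      rw [hp, coeff_sum]
      rw [Finset.sum_congr rfl fun i _ => hcoeff i]
      apply Finset.sum_pos'
      · intro i _; positivity
      · exact ⟨i₀, Finset.mem_univ i₀, by
          have := mem_support_iff.1 hi₀; positivity⟩
    have hmem : a + a ∈ p.support := mem_support_iff.2 hpos.ne'
    refine ⟨f (a + a), subset_convexHull ℝ _ ⟨a + a, hmem, rfl⟩, ?_⟩
    funext j
    simp only [hf, embR, Finsupp.add_apply, Pi.smul_apply, smul_eq_mul]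
    push_cast
    ring
  intro i
  have hsub : newtonPolytope (q i) ⊆ convexHull ℝ A :=
    convexHull_mono (Set.image_mono
      (Set.subset_iUnion (fun i => ((q i).support : Set (Fin n →₀ ℕ))) i))
  rw [hconv] at hsub
  exact hsub.trans (convexHull_min hkey ((convex_convexHull ℝ _).smul _))
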